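/- For every t < 0 and θ ∈ ℝ, the Angenent oval parametrization is a turning-angle parametrization: ∂_θ x(θ,t) = cos θ / √(cos²θ + a(t)²) and ∂_θ y(θ,t) = sin θ / √(cos²θ + a(t)²); in particular the unit tangent vector of the curve θ ↦ (x(θ,t), y(θ,t)) is (cos θ, sin θ). -/

import Mathlib

open Real

/-- `a(t) := (e^{-2t} - 1)^{-1/2}` for the Angenent oval. -/
noncomputable def angenentA (t : ℝ) : ℝ := Real.sqrt ((Real.exp (-2 * t) - 1)⁻¹)

/-- The `x`-coordinate of the Angenent oval in the turning angle parametrization. -/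
noncomputable def angenentX (θ t : ℝ) : ℝ :=
  Real.arctan (Real.sin θ / Real.sqrt (Real.cos θ ^ 2 + angenentA t ^ 2))

/-- The `y`-coordinate of the Angenent oval in the turning angle parametrization. -/
noncomputable def angenentY (θ t : ℝ) : ℝ :=
  -t + Real.log ((Real.sqrt (Real.cos θ ^ 2 + angenentA t ^ 2) - Real.cos θ) /
    Real.sqrt (angenentA t ^ 2 + 1))

/-- The Angenent oval parametrization is a turning-angle parametrization:
`∂_θ x = cos θ / √(cos²θ + a²)` and `∂_θ y = sin θ / √(cos²θ + a²)`; in particular the unit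
tangent vector (the derivative vector divided by its Euclidean length) is `(cos θ, sin θ)`. -/
theorem angenent_turning_angle (t θ : ℝ) (ht : t < 0) :
    HasDerivAt (fun s => angenentX s t)
      (Real.cos θ / Real.sqrt (Real.cos θ ^ 2 + angenentA t ^ 2)) θ ∧
    HasDerivAt (fun s => angenentY s t)
      (Real.sin θ / Real.sqrt (Real.cos θ ^ 2 + angenentA t ^ 2)) θ ∧
    (Real.sqrt ((Real.cos θ / Real.sqrt (Real.cos θ ^ 2 + angenentA t ^ 2)) ^ 2 +
        (Real.sin θ / Real.sqrt (Real.cos θ ^ 2 + angenentA t ^ 2)) ^ 2))⁻¹ •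
      ((Real.cos θ / Real.sqrt (Real.cos θ ^ 2 + angenentA t ^ 2),
        Real.sin θ / Real.sqrt (Real.cos θ ^ 2 + angenentA t ^ 2)) : ℝ × ℝ) =
      ((Real.cos θ, Real.sin θ) : ℝ × ℝ) := by
  have ha : 0 < angenentA t := by
    apply Real.sqrt_pos.mpr
    have h1 : 1 < Real.exp (-2 * t) := by
      rw [show (1:ℝ) = Real.exp 0 by simp]
      exact Real.exp_lt_exp.mpr (by linarith)
    exact inv_pos.mpr (by linarith)
  set A := angenentA t ^ 2 with hAdef
  have hA : 0 < A := by positivity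
  set c := Real.cos θ with hcdef
  set s := Real.sin θ with hsdef
  set F := Real.sqrt (c ^ 2 + A) with hFdef
  have hpos : (0:ℝ) < c ^ 2 + A := by positivity
  have hF : 0 < F := Real.sqrt_pos.mpr hpos
  have hF2 : F ^ 2 = c ^ 2 + A := Real.sq_sqrt hpos.le
  have hpy : s ^ 2 + c ^ 2 = 1 := Real.sin_sq_add_cos_sq θ
  have hinner : HasDerivAt (fun u : ℝ => Real.cos u ^ 2 + A)
      (2 * c ^ 1 * (-s)) θ := ((Real.hasDerivAt_cos θ).pow 2).add_const A
  have hFder : HasDerivAt (fun u : ℝ => Real.sqrt (Real.cos u ^ 2 + A))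
      (2 * c ^ 1 * (-s) / (2 * F)) θ := hinner.sqrt hpos.ne'
  have hFc : c < F := by
    have : |c| < F := by
      rw [← Real.sqrt_sq_eq_abs]
      exact Real.sqrt_lt_sqrt (sq_nonneg c) (by linarith)
    exact lt_of_le_of_lt (le_abs_self c) this
  refine ⟨?_, ?_, ?_⟩
  · -- x derivative
    have hx := ((Real.hasDerivAt_sin θ).div hFder hF.ne').arctan
    simp only [angenentX]
    convert hx using 1
    · rfl
    rw [Pi.div_apply, show Real.sqrt (Real.cos θ ^ 2 + A) = F from rfl,
        show Real.cos θ = c from rfl, show Real.sin θ = s from rfl]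
    field_simp
    nlinarith [hF2, hpy, hF]
  · -- y derivative
    set C := Real.sqrt (A + 1) with hCdef
    have hC : 0 < C := Real.sqrt_pos.mpr (by linarith)
    have hg : HasDerivAt (fun u : ℝ =>
        (Real.sqrt (Real.cos u ^ 2 + A) - Real.cos u) / C)
        ((2 * c ^ 1 * (-s) / (2 * F) - (-s)) / C) θ :=
      (hFder.sub (Real.hasDerivAt_cos θ)).div_const C
    have hgpos : 0 < (F - c) / C := div_pos (by linarith) hC
    have hy := (hg.log hgpos.ne').const_add (-t)
    simp only [angenentY]
    convert hy using 1
    · rfl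
    · rfl
    rw [show Real.sqrt (Real.cos θ ^ 2 + A) = F from rfl,
        show Real.cos θ = c from rfl]
    have hFc' : F - c ≠ 0 := by linarith
    field_simp
    nlinarith [hF2, hpy, hF]
  · -- unit tangent
    have h1 : (c / F) ^ 2 + (s / F) ^ 2 = (F⁻¹) ^ 2 := by
      field_simp
      linarith
    rw [h1, Real.sqrt_sq (by positivity), inv_inv]
    rw [Prod.smul_mk, smul_eq_mul, smul_eq_mul]
    field_simp
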